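/- Let (W,S) be a Coxeter system with W a finite group, and let V be a finite-dimensional complex representation of W with character χ_V. Then the virtual character DL_W(χ_V) := Σ_{I ⊆ S} (−1)^{|I|} Ind_{W_I}^W ( χ_V |_{W_I} ) is equal to the character of the representation sgn ⊗ V, i.e., for every w ∈ W, Σ_{I ⊆ S} (−1)^{|I|} · (1/|W_I|) Σ_{g ∈ W, g⁻¹wg ∈ W_I} χ_V(g⁻¹wg) = (−1)^{ℓ(w)} · χ_V(w). -/

import Mathlib

set_option linter.unusedSectionVars false

namespace SolomonAux

open List

variable {B W : Type*} [Group W] {M : CoxeterMatrix B} (cs : CoxeterSystem M W)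

local prefix:100 "σ" => cs.simple
local prefix:100 "π" => cs.wordProd
local prefix:100 "ℓ" => cs.length
local prefix:100 "ris" => cs.rightInvSeq

lemma conj_simple_eq_simple_iff (i : B) (t : W) :
    σ i * t * σ i = σ i ↔ t = σ i := by
  constructor
  · intro hc
    have := congrArg (fun x => σ i * x * σ i) hc
    simpa [mul_assoc, cs.simple_mul_simple_self, cs.simple_mul_simple_cancel_left,
      cs.simple_mul_simple_cancel_right] using this
  · rintro rfl
    simp [cs.simple_mul_simple_cancel_right, cs.simple_mul_simple_self]

open Classical in
/-- The sign-flip permutation attached to a simple generator. -/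
noncomputable def eta (i : B) : Equiv.Perm (W × ZMod 2) :=
  Function.Involutive.toPerm
    (fun p => (σ i * p.1 * σ i, p.2 + if p.1 = σ i then 1 else 0))
    (by
      intro p
      obtain ⟨t, z⟩ := p
      have key : σ i * (σ i * t * σ i) * σ i = t := by
        simp [mul_assoc, cs.simple_mul_simple_self, cs.simple_mul_simple_cancel_left,
          cs.simple_mul_simple_cancel_right]
      have flip : (σ i * t * σ i = σ i) ↔ (t = σ i) := conj_simple_eq_simple_iff cs i t
      simp only [key, Prod.mk.injEq, flip]
      refine ⟨trivial, ?_⟩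
      by_cases h : t = σ i <;> simp [h, add_assoc]
      have : (1 + 1 : ZMod 2) = 0 := by decide
      simp [this])

open Classical in
lemma eta_apply (i : B) (t : W) (z : ZMod 2) :
    eta cs i (t, z) = (σ i * t * σ i, z + if t = σ i then 1 else 0) := rfl

lemma simple_mul_p_pow (i j : B) (r : ℕ) :
    σ j * (σ i * σ j) ^ r = ((σ i * σ j)⁻¹) ^ r * σ j := by
  induction r with
  | zero => simp
  | succ n ih =>
    have h1 : σ j * (σ i * σ j) = (σ i * σ j)⁻¹ * σ j := by
      simp [mul_assoc, cs.simple_mul_simple_self, mul_inv_rev, cs.inv_simple]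
    calc σ j * (σ i * σ j) ^ (n+1) = (σ j * (σ i * σ j) ^ n) * (σ i * σ j) := by
          rw [pow_succ, mul_assoc]
      _ = ((σ i * σ j)⁻¹) ^ n * (σ j * (σ i * σ j)) := by rw [ih, mul_assoc]
      _ = ((σ i * σ j)⁻¹) ^ (n+1) * σ j := by rw [h1, pow_succ, mul_assoc]


lemma conj_pow_simple (i j : B) (r : ℕ) :
    ((σ i * σ j) ^ r)⁻¹ * σ j * (σ i * σ j) ^ r = ((σ i * σ j)⁻¹) ^ (2 * r) * σ j := by
  rw [mul_assoc, simple_mul_p_pow cs i j r, ← inv_pow, two_mul, pow_add, mul_assoc]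

lemma conj_simple_eq_iff (j : B) (x u : W) : (σ j * x * σ j = u) ↔ x = σ j * u * σ j := by
  constructor
  · intro h
    rw [← h]
    simp [← mul_assoc, cs.simple_mul_simple_self, cs.simple_mul_simple_cancel_left,
      mul_assoc, cs.simple_mul_simple_cancel_right]
  · rintro rfl
    simp [← mul_assoc, cs.simple_mul_simple_self, cs.simple_mul_simple_cancel_left,
      mul_assoc, cs.simple_mul_simple_cancel_right]


lemma conj_eq_iff' {G : Type*} [Group G] (a x u : G) : a * x * a⁻¹ = u ↔ x = a⁻¹ * u * a := by
  constructor
  · rintro rfl; group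
  · rintro rfl; group

open Classical in
lemma eta_mul_eta_pow_apply (i j : B) (n : ℕ) (t : W) (z : ZMod 2) :
    ((eta cs i * eta cs j) ^ n) (t, z) =
      ((σ i * σ j) ^ n * t * ((σ i * σ j) ^ n)⁻¹,
        z + ∑ e ∈ Finset.range (2 * n), if t = ((σ i * σ j)⁻¹) ^ e * σ j then 1 else 0) := by
  induction n with
  | zero => simp
  | succ n ih =>
    have hju : σ j * σ i * σ j = (σ i * σ j)⁻¹ * σ j := by
      rw [mul_inv_rev, cs.inv_simple, cs.inv_simple]
    have e1 : ((σ i * σ j) ^ n * t * ((σ i * σ j) ^ n)⁻¹ = σ j)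
        ↔ (t = ((σ i * σ j)⁻¹) ^ (2 * n) * σ j) := by
      rw [conj_eq_iff', conj_pow_simple cs i j n]
    have key2 : ((σ i * σ j) ^ n)⁻¹ * (σ j * σ i * σ j) * (σ i * σ j) ^ n
        = ((σ i * σ j)⁻¹) ^ (2 * n + 1) * σ j := by
      have c1 : ((σ i * σ j) ^ n)⁻¹ * (σ j * σ i * σ j) * (σ i * σ j) ^ n
          = (σ i * σ j)⁻¹ * (((σ i * σ j) ^ n)⁻¹ * σ j * (σ i * σ j) ^ n) := by
        rw [hju]
        calc ((σ i * σ j) ^ n)⁻¹ * ((σ i * σ j)⁻¹ * σ j) * (σ i * σ j) ^ n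
            = (((σ i * σ j) ^ n)⁻¹ * (σ i * σ j)⁻¹) * (σ j * (σ i * σ j) ^ n) := by
              simp only [mul_assoc]
          _ = ((σ i * σ j) * (σ i * σ j) ^ n)⁻¹ * (σ j * (σ i * σ j) ^ n) := by
              rw [← mul_inv_rev]
          _ = ((σ i * σ j) ^ (n+1))⁻¹ * (σ j * (σ i * σ j) ^ n) := by rw [← pow_succ']
          _ = ((σ i * σ j) ^ n * (σ i * σ j))⁻¹ * (σ j * (σ i * σ j) ^ n) := by rw [pow_succ]
          _ = ((σ i * σ j)⁻¹ * ((σ i * σ j) ^ n)⁻¹) * (σ j * (σ i * σ j) ^ n) := by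
              rw [mul_inv_rev]
          _ = (σ i * σ j)⁻¹ * (((σ i * σ j) ^ n)⁻¹ * σ j * (σ i * σ j) ^ n) := by
              simp only [mul_assoc]
      rw [c1, conj_pow_simple cs i j n, pow_succ', mul_assoc]
    have e2 : (σ j * ((σ i * σ j) ^ n * t * ((σ i * σ j) ^ n)⁻¹) * σ j = σ i)
        ↔ (t = ((σ i * σ j)⁻¹) ^ (2 * n + 1) * σ j) := by
      rw [conj_simple_eq_iff, conj_eq_iff', key2]
    have h2n : 2 * (n + 1) = (2 * n + 1) + 1 := by ring
    rw [pow_succ', Equiv.Perm.mul_apply, ih, Equiv.Perm.mul_apply, eta_apply, eta_apply,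
      h2n, Finset.sum_range_succ, Finset.sum_range_succ]
    refine Prod.ext ?_ ?_
    · show σ i * (σ j * ((σ i * σ j) ^ n * t * ((σ i * σ j) ^ n)⁻¹) * σ j) * σ i
        = (σ i * σ j) ^ (n + 1) * t * ((σ i * σ j) ^ (n + 1))⁻¹
      have hji : σ j * σ i = (σ i * σ j)⁻¹ := by
        rw [mul_inv_rev, cs.inv_simple, cs.inv_simple]
      calc σ i * (σ j * ((σ i * σ j) ^ n * t * ((σ i * σ j) ^ n)⁻¹) * σ j) * σ i
          = (σ i * σ j) * ((σ i * σ j) ^ n * t * ((σ i * σ j) ^ n)⁻¹) * (σ j * σ i) := by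
            simp only [mul_assoc]
        _ = (σ i * σ j) * ((σ i * σ j) ^ n * t * ((σ i * σ j) ^ n)⁻¹) * (σ i * σ j)⁻¹ := by
            rw [hji]
        _ = ((σ i * σ j) * (σ i * σ j) ^ n) * t * (((σ i * σ j) ^ n)⁻¹ * (σ i * σ j)⁻¹) := by
            simp only [mul_assoc]
        _ = ((σ i * σ j) * (σ i * σ j) ^ n) * t * (((σ i * σ j) * (σ i * σ j) ^ n)⁻¹) := by
            rw [← mul_inv_rev]
        _ = (σ i * σ j) ^ (n + 1) * t * ((σ i * σ j) ^ (n + 1))⁻¹ := by rw [← pow_succ']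
    · show z + _ + (if (σ i * σ j) ^ n * t * ((σ i * σ j) ^ n)⁻¹ = σ j then (1:ZMod 2) else 0)
          + (if σ j * ((σ i * σ j) ^ n * t * ((σ i * σ j) ^ n)⁻¹) * σ j = σ i then 1 else 0)
        = z + (_ + _ + _)
      simp only [e1, e2]
      abel

open Classical in
lemma eta_liftable : M.IsLiftable (fun i => eta cs i) := by
  intro i j
  apply Equiv.ext
  rintro ⟨t, z⟩
  show ((eta cs i * eta cs j) ^ M i j) (t, z) = (1 : Equiv.Perm (W × ZMod 2)) (t, z)
  rw [eta_mul_eta_pow_apply cs i j (M i j) t z, cs.simple_mul_simple_pow i j]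
  have hq : ((σ i * σ j)⁻¹) ^ (M i j) = 1 := by
    rw [inv_pow, cs.simple_mul_simple_pow i j, inv_one]
  have hsum : ∑ e ∈ Finset.range (2 * M i j),
      (if t = ((σ i * σ j)⁻¹) ^ e * σ j then (1 : ZMod 2) else 0) = 0 := by
    have h2 : 2 * M i j = M i j + M i j := by ring
    rw [h2, Finset.sum_range_add]
    have heq : ∀ e, (if t = ((σ i * σ j)⁻¹) ^ (M i j + e) * σ j then (1 : ZMod 2) else 0)
        = (if t = ((σ i * σ j)⁻¹) ^ e * σ j then (1 : ZMod 2) else 0) := by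
      intro e
      rw [pow_add, hq, one_mul]
    simp only [heq]
    rw [← two_mul]
    have : (2 : ZMod 2) = 0 := by decide
    rw [this, zero_mul]
  rw [hsum]
  simp

/-- The homomorphism from `W` to permutations of `W × ZMod 2`. -/
noncomputable def Phi : W →* Equiv.Perm (W × ZMod 2) :=
  cs.lift ⟨fun i => eta cs i, eta_liftable cs⟩

lemma Phi_simple (i : B) : Phi cs (σ i) = eta cs i :=
  cs.lift_apply_simple (eta_liftable cs) i

open Classical in
/-- Mod-2 count of occurrences of `t` in a list. -/
noncomputable def zcount (t : W) (l : List W) : ZMod 2 :=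
  (l.map (fun x => if x = t then (1 : ZMod 2) else 0)).sum

open Classical in
lemma zcount_nil (t : W) : zcount t ([] : List W) = 0 := rfl

open Classical in
lemma zcount_cons (t a : W) (l : List W) :
    zcount t (a :: l) = (if a = t then 1 else 0) + zcount t l := rfl

open Classical in
lemma zcount_append (t : W) (l l' : List W) :
    zcount t (l ++ l') = zcount t l + zcount t l' := by
  simp [zcount]

open Classical in
lemma zcount_eq_zero_of_not_mem {t : W} {l : List W} (h : t ∉ l) : zcount t l = 0 := by
  induction l with
  | nil => rfl
  | cons a l ih =>
    rw [zcount_cons]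
    have ha : a ≠ t := fun hc => h (hc ▸ List.mem_cons_self)
    rw [if_neg ha, ih (fun hc => h (List.mem_cons_of_mem a hc)), add_zero]

open Classical in
lemma mem_of_zcount_ne_zero {t : W} {l : List W} (h : zcount t l ≠ 0) : t ∈ l := by
  by_contra hc
  exact h (zcount_eq_zero_of_not_mem hc)

open Classical in
lemma zcount_eq_one_of_nodup_mem {t : W} {l : List W} (hn : l.Nodup) (h : t ∈ l) :
    zcount t l = 1 := by
  induction l with
  | nil => simp at h
  | cons a l ih =>
    rw [zcount_cons]
    rcases List.mem_cons.mp h with rfl | h'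
    · rw [if_pos rfl, zcount_eq_zero_of_not_mem (List.nodup_cons.mp hn).1, add_zero]
    · have ha : a ≠ t := by
        rintro rfl
        exact (List.nodup_cons.mp hn).1 h'
      rw [if_neg ha, ih (List.nodup_cons.mp hn).2 h', zero_add]

open Classical in
lemma zcount_map_conj (t c : W) (l : List W) :
    zcount t (l.map (fun x => c⁻¹ * x * c)) = zcount (c * t * c⁻¹) l := by
  simp only [zcount, List.map_map]
  congr 1
  apply List.map_congr_left
  intro x _
  simp only [Function.comp_apply]
  have hiff : (c⁻¹ * x * c = t) ↔ (x = c * t * c⁻¹) := by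
    constructor
    · rintro rfl; group
    · rintro rfl; group
  simp only [hiff]

lemma rightInvSeq_cons (i : B) (ω : List B) :
    cs.rightInvSeq (i :: ω) = ((π ω)⁻¹ * σ i * π ω) :: cs.rightInvSeq ω := rfl

lemma rightInvSeq_append (α β : List B) :
    cs.rightInvSeq (α ++ β)
      = (cs.rightInvSeq α).map (fun x => (π β)⁻¹ * x * π β) ++ cs.rightInvSeq β := by
  induction α with
  | nil => simp
  | cons i α ih =>
    rw [List.cons_append, rightInvSeq_cons, rightInvSeq_cons, ih, List.map_cons,
      List.cons_append]
    have hh : (π (α ++ β))⁻¹ * σ i * π (α ++ β) = (π β)⁻¹ * ((π α)⁻¹ * σ i * π α) * π β := by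
      rw [cs.wordProd_append, mul_inv_rev]
      simp only [mul_assoc]
    rw [hh]

open Classical in
lemma Phi_wordProd (ω : List B) (t : W) (z : ZMod 2) :
    Phi cs (π ω) (t, z) = ((π ω) * t * (π ω)⁻¹, z + zcount t (cs.rightInvSeq ω)) := by
  induction ω generalizing z with
  | nil => simp [zcount_nil]
  | cons i ω ih =>
    rw [cs.wordProd_cons, map_mul, Equiv.Perm.mul_apply, ih, Phi_simple, eta_apply]
    rw [rightInvSeq_cons, zcount_cons]
    refine Prod.ext ?_ ?_
    · show σ i * (π ω * t * (π ω)⁻¹) * σ i = σ i * π ω * t * (σ i * π ω)⁻¹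
      rw [mul_inv_rev, cs.inv_simple]
      simp only [mul_assoc]
    · show z + zcount t (cs.rightInvSeq ω) + (if π ω * t * (π ω)⁻¹ = σ i then 1 else 0)
        = z + ((if (π ω)⁻¹ * σ i * π ω = t then 1 else 0) + zcount t (cs.rightInvSeq ω))
      have hiff : (π ω * t * (π ω)⁻¹ = σ i) ↔ ((π ω)⁻¹ * σ i * π ω = t) := by
        rw [conj_eq_iff']
        exact eq_comm
      simp only [hiff]
      abel

open Classical in
/-- The mod-2 number of times a reflection `t` occurs in the inversion sequence of any
word for `w`; well-defined by `Phi`. -/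
noncomputable def par (w t : W) : ZMod 2 := (Phi cs w (t, 0)).2

open Classical in
lemma par_eq_zcount {w : W} {ω : List B} (hω : π ω = w) (t : W) :
    par cs w t = zcount t (cs.rightInvSeq ω) := by
  rw [par, ← hω, Phi_wordProd, zero_add]

lemma zcount_reverse (t : W) (l : List W) : zcount t l.reverse = zcount t l := by
  simp [zcount, List.map_reverse, List.sum_reverse]

open Classical in
lemma zcount_map_conj' (t c : W) (l : List W) :
    zcount t (l.map (fun x => c * x * c⁻¹)) = zcount (c⁻¹ * t * c) l := by
  simp only [zcount, List.map_map]
  congr 1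
  apply List.map_congr_left
  intro x _
  simp only [Function.comp_apply]
  have hiff : (c * x * c⁻¹ = t) ↔ (x = c⁻¹ * t * c) := by
    constructor
    · rintro rfl; group
    · rintro rfl; group
  simp only [hiff]

lemma leftInvSeq_eq_map (γ : List B) :
    cs.leftInvSeq γ = (cs.rightInvSeq γ).map (fun x => π γ * x * (π γ)⁻¹) := by
  induction γ with
  | nil => simp
  | cons i γ ih =>
    have hl : cs.leftInvSeq (i :: γ) = σ i :: (cs.leftInvSeq γ).map (MulAut.conj (σ i)) := rfl
    rw [hl, rightInvSeq_cons, List.map_cons, ih, List.map_map]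
    congr 1
    · rw [cs.wordProd_cons]
      group
    · apply List.map_congr_left
      intro x _
      simp only [Function.comp_apply, MulAut.conj_apply, cs.wordProd_cons, mul_inv_rev,
        cs.inv_simple]
      group

open Classical in
lemma par_mul (u v t : W) : par cs (u * v) t = par cs u (v * t * v⁻¹) + par cs v t := by
  obtain ⟨α, hα⟩ := cs.wordProd_surjective u
  obtain ⟨β, hβ⟩ := cs.wordProd_surjective v
  have h1 : π (α ++ β) = u * v := by rw [cs.wordProd_append, hα, hβ]
  rw [par_eq_zcount cs h1 t, par_eq_zcount cs hα (v * t * v⁻¹), par_eq_zcount cs hβ t,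
    rightInvSeq_append, zcount_append, zcount_map_conj]
  rw [hβ]

open Classical in
lemma par_reflection_self {t : W} (ht : cs.IsReflection t) : par cs t t = 1 := by
  obtain ⟨w, i, rfl⟩ := ht
  obtain ⟨γ, hγ⟩ := cs.wordProd_surjective w
  have hξ : π (γ ++ (i :: γ.reverse)) = w * σ i * w⁻¹ := by
    rw [cs.wordProd_append, cs.wordProd_cons, cs.wordProd_reverse, hγ, mul_assoc]
  rw [par_eq_zcount cs hξ, rightInvSeq_append, zcount_append]
  have h1 : zcount (w * σ i * w⁻¹)
      ((cs.rightInvSeq γ).map (fun x => (π (i :: γ.reverse))⁻¹ * x * π (i :: γ.reverse)))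
      = zcount (σ i) (cs.rightInvSeq γ) := by
    rw [zcount_map_conj]
    congr 1
    rw [cs.wordProd_cons, cs.wordProd_reverse, hγ]
    have hg : σ i * w⁻¹ * (w * σ i * w⁻¹) * (σ i * w⁻¹)⁻¹ = σ i * σ i * (σ i)⁻¹ := by
      group
    rw [hg, mul_inv_cancel_right]
  rw [h1, rightInvSeq_cons, zcount_cons]
  have hhead : (π γ.reverse)⁻¹ * σ i * π γ.reverse = w * σ i * w⁻¹ := by
    rw [cs.wordProd_reverse, hγ, inv_inv]
  rw [if_pos hhead]
  have h2 : zcount (w * σ i * w⁻¹) (cs.rightInvSeq γ.reverse)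
      = zcount (σ i) (cs.rightInvSeq γ) := by
    rw [cs.rightInvSeq_reverse, zcount_reverse, leftInvSeq_eq_map, zcount_map_conj', hγ]
    congr 1
    group
  rw [h2]
  have : ∀ a : ZMod 2, a + (1 + a) = 1 := by decide
  exact this _

open Classical in
theorem strong_exchange {w t : W} (ht : cs.IsReflection t)
    (hlt : cs.length (w * t) < cs.length w)
    {ω : List B} (hred : cs.IsReduced ω) (hw : π ω = w) : t ∈ cs.rightInvSeq ω := by
  have htt : t * t = 1 := ht.mul_self
  have hpar : par cs w t = par cs (w * t) t + 1 := by
    have : w = (w * t) * t := by rw [mul_assoc, htt, mul_one]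
    nth_rewrite 1 [this]
    rw [par_mul]
    have h3 : t * t * t⁻¹ = t := by group
    rw [h3, par_reflection_self cs ht]
  obtain ⟨τ, hτred, hτ⟩ := cs.exists_reduced_word' (w * t)
  have hz : par cs (w * t) t = 0 := by
    rw [par_eq_zcount cs hτ.symm]
    apply zcount_eq_zero_of_not_mem
    intro hmem
    have hinv := cs.isRightInversion_of_mem_rightInvSeq hτred hmem
    rw [← hτ] at hinv
    have : cs.length (w * t * t) < cs.length (w * t) := hinv.2
    rw [mul_assoc, htt, mul_one] at this
    omega
  have hone : par cs w t = 1 := by rw [hpar, hz, zero_add]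
  apply mem_of_zcount_ne_zero
  rw [← par_eq_zcount cs hw t, hone]
  decide

theorem exchange_simple {w : W} {k : B} (h : cs.IsRightDescent w k)
    {ω : List B} (hred : cs.IsReduced ω) (hw : π ω = w) :
    ∃ j < ω.length, w * σ k = π (ω.eraseIdx j) := by
  have hmem : σ k ∈ cs.rightInvSeq ω :=
    strong_exchange cs (cs.isReflection_simple k) h hred hw
  obtain ⟨j, hj, hEq⟩ := List.mem_iff_getElem.mp hmem
  rw [cs.length_rightInvSeq] at hj
  refine ⟨j, hj, ?_⟩
  have hgd : (cs.rightInvSeq ω).getD j 1 = σ k := by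
    rw [List.getD_eq_getElem?_getD, List.getElem?_eq_getElem (by rwa [cs.length_rightInvSeq])]
    simpa using hEq
  rw [← hw, ← hgd]
  exact cs.wordProd_mul_getD_rightInvSeq ω j

theorem exists_reduced_sublist_aux :
    ∀ (N : ℕ) (ω : List B), ω.length ≤ N →
      ∃ ω' : List B, ω'.Sublist ω ∧ cs.IsReduced ω' ∧ π ω' = π ω := by
  intro N
  induction N with
  | zero =>
    intro ω hω
    rw [Nat.le_zero, List.length_eq_zero_iff] at hω
    exact ⟨ω, List.Sublist.refl ω, by simp [hω, CoxeterSystem.IsReduced], rfl⟩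
  | succ N ihN =>
    intro ω hω
    by_cases hred : cs.IsReduced ω
    · exact ⟨ω, List.Sublist.refl ω, hred, rfl⟩
    · have hne : ω ≠ [] := by
        rintro rfl
        exact hred (by simp [CoxeterSystem.IsReduced])
      have hlen : 1 ≤ ω.length := List.length_pos_iff.mpr hne
      have hP : ¬ cs.IsReduced (ω.take ((ω.length - 1) + 1)) := by
        rwa [Nat.sub_add_cancel hlen, List.take_length]
      have hex : ∃ n, ¬ cs.IsReduced (ω.take (n + 1)) := ⟨ω.length - 1, hP⟩
      classical
      set n := Nat.find hex with hn
      have hnP : ¬ cs.IsReduced (ω.take (n + 1)) := Nat.find_spec hex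
      have hnlt : n < ω.length := by
        have : n ≤ ω.length - 1 := Nat.find_le hP
        omega
      have hρred : cs.IsReduced (ω.take n) := by
        rcases n.eq_zero_or_pos with h0 | hpos
        · rw [h0]
          simp [CoxeterSystem.IsReduced]
        · have := Nat.find_min hex (m := n - 1) (by omega)
          rw [(by omega : n - 1 + 1 = n)] at this
          exact not_not.mp this
      set c := ω[n] with hc
      have htake : ω.take (n + 1) = ω.take n ++ [c] := by
        rw [List.take_succ, List.getElem?_eq_getElem hnlt]
        rfl
      have hρlen : (ω.take n).length = n := by
        rw [List.length_take]
        omega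
      have hdesc : cs.IsRightDescent (π (ω.take n)) c := by
        have hlen1 : cs.length (π (ω.take n) * σ c) < n + 1 := by
          have h2 := hnP
          rw [htake] at h2
          unfold CoxeterSystem.IsReduced at h2
          rw [cs.wordProd_append, cs.wordProd_singleton] at h2
          have hle := cs.length_wordProd_le (ω.take n ++ [c])
          rw [cs.wordProd_append, cs.wordProd_singleton] at hle
          simp only [List.length_append, List.length_singleton, hρlen] at hle h2
          omega
        have hne2 := cs.length_mul_simple_ne (π (ω.take n)) c
        unfold CoxeterSystem.IsRightDescent
        have : cs.length (π (ω.take n)) = n := by rw [hρred, hρlen]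
        omega
      obtain ⟨j, hjlt, hjEq⟩ := exchange_simple cs hdesc hρred rfl
      set ω' := (ω.take n).eraseIdx j ++ ω.drop (n + 1) with hω'
      have hπ : π ω' = π ω := by
        rw [hω', cs.wordProd_append, ← hjEq]
        conv_rhs => rw [← List.take_append_drop (n+1) ω]
        rw [cs.wordProd_append, htake, cs.wordProd_append, cs.wordProd_singleton]
      have hsub : ω'.Sublist ω := by
        rw [hω']
        conv_rhs => rw [← List.take_append_drop (n+1) ω]
        apply List.Sublist.append
        · exact ((ω.take n).eraseIdx_sublist j).trans
            (by rw [htake]; exact (List.sublist_append_left _ _))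
        · exact List.Sublist.refl _
      have hlen' : ω'.length ≤ N := by
        have hjlt' := hjlt
        have h1 : ((ω.take n).eraseIdx j).length + 1 = (ω.take n).length :=
          List.length_eraseIdx_add_one hjlt'
        have h3 : (ω.drop (n+1)).length = ω.length - (n+1) := by simp
        rw [hω', List.length_append]
        rw [hρlen] at h1
        omega
      obtain ⟨ω'', hsub'', hred'', hπ''⟩ := ihN ω' hlen'
      exact ⟨ω'', hsub''.trans hsub, hred'', by rw [hπ'', hπ]⟩

theorem exists_reduced_sublist (ω : List B) :
    ∃ ω', ω'.Sublist ω ∧ cs.IsReduced ω' ∧ π ω' = π ω :=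
  exists_reduced_sublist_aux cs ω.length ω le_rfl

/-- The standard parabolic subgroup attached to `I`. -/
def PG (I : Finset B) : Subgroup W := Subgroup.closure (cs.simple '' (I : Set B))

lemma exists_word_of_mem_PG {I : Finset B} {x : W} (hx : x ∈ PG cs I) :
    ∃ α : List B, (∀ b ∈ α, b ∈ I) ∧ π α = x := by
  induction hx using Subgroup.closure_induction with
  | mem x hx =>
    obtain ⟨i, hi, rfl⟩ := hx
    exact ⟨[i], by simpa using hi, by simp⟩
  | one => exact ⟨[], by simp, by simp⟩
  | mul x y hx hy ihx ihy =>
    obtain ⟨α, hα, hπα⟩ := ihx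
    obtain ⟨β, hβ, hπβ⟩ := ihy
    refine ⟨α ++ β, ?_, by rw [cs.wordProd_append, hπα, hπβ]⟩
    intro b hb
    rcases List.mem_append.mp hb with h | h
    · exact hα b h
    · exact hβ b h
  | inv x hx ihx =>
    obtain ⟨α, hα, hπα⟩ := ihx
    exact ⟨α.reverse, fun b hb => hα b (List.mem_reverse.mp hb),
      by rw [cs.wordProd_reverse, hπα]⟩

lemma wordProd_mem_PG {I : Finset B} {α : List B} (h : ∀ b ∈ α, b ∈ I) :
    π α ∈ PG cs I := by
  induction α with
  | nil => simp [one_mem]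
  | cons i α ih =>
    rw [cs.wordProd_cons]
    refine mul_mem ?_ (ih fun b hb => h b (List.mem_cons_of_mem i hb))
    exact Subgroup.subset_closure ⟨i, by simpa using h i (List.mem_cons_self), rfl⟩

lemma simple_mem_PG {I : Finset B} {i : B} (hi : i ∈ I) : σ i ∈ PG cs I :=
  Subgroup.subset_closure ⟨i, by simpa using hi, rfl⟩

/-- `u` is a distinguished element: no left descents in `I`, no right descents in `K`. -/
def IsDist (I K : Finset B) (u : W) : Prop :=
  (∀ i ∈ I, ¬ cs.IsLeftDescent u i) ∧ (∀ k ∈ K, ¬ cs.IsRightDescent u k)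

lemma half_lemma {I K : Finset B} {x x' a b : W}
    (ha : a ∈ PG cs I) (hb : b ∈ PG cs K) (hdist : IsDist cs I K x')
    (heq : x' = a * x * b) {ωx : List B} (hx : π ωx = x) :
    ∃ δ : List B, δ.Sublist ωx ∧ cs.IsReduced δ ∧ π δ = x' := by
  obtain ⟨α, hα, hπα⟩ := exists_word_of_mem_PG cs ha
  obtain ⟨β, hβ, hπβ⟩ := exists_word_of_mem_PG cs hb
  have htot : π (α ++ (ωx ++ β)) = x' := by
    rw [cs.wordProd_append, cs.wordProd_append, hπα, hx, hπβ, heq, mul_assoc]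
  obtain ⟨ς, hςsub, hςred, hςπ⟩ := exists_reduced_sublist cs (α ++ (ωx ++ β))
  rw [htot] at hςπ
  obtain ⟨ς₁, rest, rfl, hς₁, hrest⟩ := List.sublist_append_iff.mp hςsub
  obtain ⟨ς₂, ς₃, rfl, hς₂, hς₃⟩ := List.sublist_append_iff.mp hrest
  have hℓ : cs.length x' = ς₁.length + (ς₂.length + ς₃.length) := by
    rw [← hςπ, hςred]
    simp
  have hς₁nil : ς₁ = [] := by
    by_contra hne
    obtain ⟨i, tl, rfl⟩ := List.exists_cons_of_ne_nil hne
    have hiI : i ∈ I := hα i (hς₁.subset (List.mem_cons_self))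
    refine hdist.1 i hiI ?_
    unfold CoxeterSystem.IsLeftDescent
    have hπ' : σ i * x' = π (tl ++ ς₂ ++ ς₃) := by
      rw [← hςπ]
      simp only [List.cons_append, cs.wordProd_cons]
      rw [cs.simple_mul_simple_cancel_left]
      rw [List.append_assoc]
    have hle := cs.length_wordProd_le (tl ++ ς₂ ++ ς₃)
    rw [← hπ'] at hle
    simp only [List.length_append, List.length_cons] at hle hℓ
    omega
  have hς₃nil : ς₃ = [] := by
    by_contra hne
    rcases List.eq_nil_or_concat ς₃ with h | ⟨init, k, rfl⟩
    · exact hne h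
    have hkK : k ∈ K := hβ k (hς₃.subset (by simp))
    refine hdist.2 k hkK ?_
    unfold CoxeterSystem.IsRightDescent
    have hπ' : x' * σ k = π (ς₁ ++ ς₂ ++ init) := by
      rw [← hςπ]
      simp only [List.concat_eq_append, ← List.append_assoc]
      rw [cs.wordProd_append (ς₁ ++ ς₂ ++ init) [k], cs.wordProd_singleton,
        cs.simple_mul_simple_cancel_right]
    have hle := cs.length_wordProd_le (ς₁ ++ ς₂ ++ init)
    rw [← hπ'] at hle
    simp only [List.length_append, List.concat_eq_append, List.length_cons] at hle hℓ
    omega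
  subst hς₁nil hς₃nil
  simp only [List.nil_append, List.append_nil] at hςπ hςred hς₂ ⊢
  exact ⟨ς₂, hς₂, hςred, hςπ⟩

theorem dist_unique {I K : Finset B} {x x' : W} (hdx : IsDist cs I K x)
    (hdx' : IsDist cs I K x') {a b : W} (ha : a ∈ PG cs I) (hb : b ∈ PG cs K)
    (heq : x' = a * x * b) : x' = x := by
  obtain ⟨ωx, hωxred, hωx⟩ := cs.exists_reduced_word' x
  obtain ⟨ωx', hωx'red, hωx'⟩ := cs.exists_reduced_word' x'
  obtain ⟨δ, hδsub, hδred, hδπ⟩ := half_lemma cs ha hb hdx' heq hωx.symm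
  have heq2 : x = a⁻¹ * x' * b⁻¹ := by rw [heq]; group
  obtain ⟨δ', hδ'sub, hδ'red, hδ'π⟩ :=
    half_lemma cs (inv_mem ha) (inv_mem hb) hdx heq2 hωx'.symm
  have e1 : cs.length x' = δ.length := by rw [← hδπ]; exact hδred
  have e2 : cs.length x = ωx.length := by rw [hωx]; exact hωxred
  have e3 : cs.length x = δ'.length := by rw [← hδ'π]; exact hδ'red
  have e4 : cs.length x' = ωx'.length := by rw [hωx']; exact hωx'red
  have l1 := hδsub.length_le
  have l2 := hδ'sub.length_le
  have hδfull : δ = ωx := hδsub.eq_of_length (by omega)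
  rw [← hδπ, hδfull, ← hωx]

theorem exists_dist [Fintype W] (I K : Finset B) (u : W) :
    ∃ x : W, IsDist cs I K x ∧ ∃ a ∈ PG cs I, ∃ b ∈ PG cs K, x = a * u * b := by
  classical
  set S : Finset W := Finset.univ.filter
    (fun x => ∃ a ∈ PG cs I, ∃ b ∈ PG cs K, x = a * u * b) with hS
  have hmemS : ∀ x, x ∈ S ↔ ∃ a ∈ PG cs I, ∃ b ∈ PG cs K, x = a * u * b := by
    intro x
    simp [hS]
  have hSne : S.Nonempty := ⟨u, (hmemS u).mpr ⟨1, one_mem _, 1, one_mem _, by group⟩⟩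
  obtain ⟨x, hxS, hxmin⟩ := S.exists_min_image cs.length hSne
  obtain ⟨a, ha, b, hb, hxe⟩ := (hmemS x).mp hxS
  refine ⟨x, ⟨?_, ?_⟩, a, ha, b, hb, hxe⟩
  · intro i hi hdesc
    have hmem2 : σ i * x ∈ S := (hmemS _).mpr
      ⟨σ i * a, mul_mem (simple_mem_PG cs hi) ha, b, hb, by rw [hxe]; group⟩
    have := hxmin _ hmem2
    exact absurd hdesc (by unfold CoxeterSystem.IsLeftDescent; omega)
  · intro k hk hdesc
    have hmem2 : x * σ k ∈ S := (hmemS _).mpr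
      ⟨a, ha, b * σ k, mul_mem hb (simple_mem_PG cs hk), by rw [hxe]; group⟩
    have := hxmin _ hmem2
    exact absurd hdesc (by unfold CoxeterSystem.IsRightDescent; omega)

open Classical in
lemma isRightInversion_iff_par_one {w t : W} (ht : cs.IsReflection t) :
    cs.IsRightInversion w t ↔ par cs w t = 1 := by
  obtain ⟨ω, hred, hw⟩ := cs.exists_reduced_word' w
  constructor
  · intro hinv
    rw [par_eq_zcount cs hw.symm]
    exact zcount_eq_one_of_nodup_mem (hred.nodup_rightInvSeq)
      (strong_exchange cs ht hinv.2 hred hw.symm)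
  · intro hpar
    have hmem : t ∈ cs.rightInvSeq ω := by
      apply mem_of_zcount_ne_zero
      rw [← par_eq_zcount cs hw.symm, hpar]
      decide
    have := cs.isRightInversion_of_mem_rightInvSeq hred hmem
    rwa [← hw] at this

section Longest

variable [Fintype W]

open Classical in
/-- The set of right inversions of `w`. -/
noncomputable def InvF (w : W) : Finset W :=
  Finset.univ.filter (fun t => cs.IsRightInversion w t)

open Classical in
/-- The set of all reflections. -/
noncomputable def ReflF : Finset W :=
  Finset.univ.filter (fun t => cs.IsReflection t)

open Classical in
lemma card_InvF (w : W) : (InvF cs w).card = cs.length w := by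
  obtain ⟨ω, hred, hw⟩ := cs.exists_reduced_word' w
  have hset : InvF cs w = (cs.rightInvSeq ω).toFinset := by
    ext t
    simp only [InvF, Finset.mem_filter, Finset.mem_univ, true_and, List.mem_toFinset]
    constructor
    · intro hinv
      exact strong_exchange cs hinv.1 hinv.2 hred hw.symm
    · intro hmem
      have := cs.isRightInversion_of_mem_rightInvSeq hred hmem
      rwa [← hw] at this
  rw [hset, List.toFinset_card_of_nodup hred.nodup_rightInvSeq, cs.length_rightInvSeq,
    hw, hred]

open Classical in
lemma InvF_eq_filter_par (w : W) :
    InvF cs w = (ReflF cs).filter (fun t => par cs w t = 1) := by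
  ext t
  simp only [InvF, ReflF, Finset.mem_filter, Finset.mem_univ, true_and]
  constructor
  · intro hinv
    exact ⟨hinv.1, (isRightInversion_iff_par_one cs hinv.1).mp hinv⟩
  · rintro ⟨hrefl, hpar⟩
    exact (isRightInversion_iff_par_one cs hrefl).mpr hpar

open Classical in
theorem eq_longest_of_all_right_descents {w₀ u : W}
    (hmax : ∀ v : W, cs.length v ≤ cs.length w₀)
    (hu : ∀ k : B, cs.IsRightDescent u k) : u = w₀ := by
  set x := u⁻¹ * w₀ with hx
  have hw₀x : w₀ = u * x := by rw [hx]; group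
  -- every reflection is an inversion of w₀
  have hw₀inv : ∀ t : W, cs.IsReflection t → cs.IsRightInversion w₀ t := by
    intro t ht
    refine ⟨ht, ?_⟩
    have hne := ht.length_mul_left_ne w₀
    have := hmax (w₀ * t)
    omega
  have hparw₀ : ∀ t : W, cs.IsReflection t → par cs w₀ t = 1 := fun t ht =>
    (isRightInversion_iff_par_one cs ht).mp (hw₀inv t ht)
  -- cocycle
  have hco : ∀ t : W, par cs w₀ t = par cs u (x * t * x⁻¹) + par cs x t := by
    intro t
    rw [hw₀x, par_mul]
  -- length additivity via inversion counting
  have hcard1 : InvF cs x = (ReflF cs).filter (fun t => par cs u (x * t * x⁻¹) = 0) := by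
    rw [InvF_eq_filter_par]
    apply Finset.filter_congr
    intro t htR
    have htrefl : cs.IsReflection t := by
      simpa [ReflF] using htR
    have h1 := hparw₀ t htrefl
    rw [hco t] at h1
    constructor
    · intro h2
      rw [h2] at h1
      simpa using by
        have : par cs u (x * t * x⁻¹) + 1 = 1 := h1
        have h3 : par cs u (x * t * x⁻¹) = 0 := by
          have := congrArg (· + 1) this
          simpa using this
        simpa using h3
    · intro h2
      rw [h2, zero_add] at h1
      simp [h1]
  have hcard2 : ((ReflF cs).filter (fun t => par cs u (x * t * x⁻¹) = 0)).card
      = ((ReflF cs).filter (fun t => par cs u t = 0)).card := by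
    apply Finset.card_bij (fun t _ => x * t * x⁻¹)
    · intro t htm
      simp only [Finset.mem_filter, ReflF, Finset.mem_univ, true_and] at htm ⊢
      exact ⟨htm.1.conj x, htm.2⟩
    · intro t₁ h₁ t₂ h₂ hEq
      have := congrArg (fun y => x⁻¹ * y * x) hEq
      simpa [mul_assoc] using this
    · intro t' ht'
      simp only [Finset.mem_filter, ReflF, Finset.mem_univ, true_and] at ht'
      refine ⟨x⁻¹ * t' * x, ?_, by group⟩
      simp only [Finset.mem_filter, ReflF, Finset.mem_univ, true_and]
      constructor
      · have := ht'.1.conj x⁻¹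
        simpa using this
      · have hc : x * (x⁻¹ * t' * x) * x⁻¹ = t' := by group
        rw [hc]
        exact ht'.2
  have hcard3 : ((ReflF cs).filter (fun t => par cs u t = 0)).card
      = (ReflF cs).card - ((ReflF cs).filter (fun t => par cs u t = 1)).card := by
    have hnot : (ReflF cs).filter (fun t => par cs u t = 0)
        = (ReflF cs).filter (fun t => ¬ (par cs u t = 1)) := by
      apply Finset.filter_congr
      intro t _
      have : ∀ z : ZMod 2, z = 0 ↔ ¬ (z = 1) := by decide
      exact this _
    rw [hnot, Finset.filter_not, Finset.card_sdiff_of_subset (Finset.filter_subset _ _)]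
  have hlenx : cs.length x = cs.length w₀ - cs.length u := by
    have c1 : cs.length x = ((ReflF cs).filter (fun t => par cs u (x * t * x⁻¹) = 0)).card := by
      rw [← card_InvF cs x, hcard1]
    have c2 : cs.length u = ((ReflF cs).filter (fun t => par cs u t = 1)).card := by
      rw [← card_InvF cs u, InvF_eq_filter_par]
    have c3 : cs.length w₀ = (ReflF cs).card := by
      rw [← card_InvF cs w₀, InvF_eq_filter_par]
      congr 1
      apply Finset.filter_eq_self.mpr
      intro t htm
      exact hparw₀ t (by simpa [ReflF] using htm)
    omega
  have hmono : ((ReflF cs).filter (fun t => par cs u t = 1)).card ≤ (ReflF cs).card :=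
    Finset.card_filter_le _ _
  have hadd : cs.length u + cs.length x = cs.length w₀ := by
    have c2 : cs.length u = ((ReflF cs).filter (fun t => par cs u t = 1)).card := by
      rw [← card_InvF cs u, InvF_eq_filter_par]
    have c3 : cs.length w₀ = (ReflF cs).card := by
      rw [← card_InvF cs w₀, InvF_eq_filter_par]
      congr 1
      apply Finset.filter_eq_self.mpr
      intro t htm
      exact hparw₀ t (by simpa [ReflF] using htm)
    omega
  -- conclude x = 1
  by_contra hne
  have hxne : x ≠ 1 := by
    intro hc
    apply hne
    rw [hc, mul_one] at hw₀x
    exact hw₀x.symm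
  obtain ⟨ωu, hωured, hωu⟩ := cs.exists_reduced_word' u
  obtain ⟨ωx, hωxred, hωx⟩ := cs.exists_reduced_word' x
  have hωxne : ωx ≠ [] := by
    rintro rfl
    exact hxne (by simpa using hωx)
  obtain ⟨j, tl, rfl⟩ := List.exists_cons_of_ne_nil hωxne
  have hfullred : cs.IsReduced (ωu ++ (j :: tl)) := by
    unfold CoxeterSystem.IsReduced
    have hπ : π (ωu ++ (j :: tl)) = w₀ := by
      rw [cs.wordProd_append, ← hωu, ← hωx, hw₀x]
    rw [hπ, List.length_append]
    have : cs.length u = ωu.length := by rw [hωu]; exact hωured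
    have : cs.length x = (j :: tl).length := by rw [hωx]; exact hωxred
    omega
  have hpref : cs.IsReduced (ωu ++ [j]) := by
    have := hfullred.take (ωu.length + 1)
    rwa [List.take_append, List.take_of_length_le (by omega),
      (by omega : ωu.length + 1 - ωu.length = 1), List.take_cons, List.take_zero] at this
    omega
  have hnd : ¬ cs.IsRightDescent u j := by
    unfold CoxeterSystem.IsRightDescent
    have hπ2 : π (ωu ++ [j]) = u * σ j := by
      rw [cs.wordProd_append, ← hωu, cs.wordProd_singleton]
    have := hpref
    unfold CoxeterSystem.IsReduced at this
    rw [hπ2] at this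
    have hu' : cs.length u = ωu.length := by rw [hωu]; exact hωured
    simp only [List.length_append, List.length_singleton] at this
    omega
  exact hnd (hu j)

end Longest

section Counting

variable [Fintype W]

open Classical Finset

/-- The double coset relation. -/
def rel (I K : Finset B) (u v : W) : Prop := ∃ a ∈ PG cs I, ∃ b ∈ PG cs K, v = a * u * b

lemma rel_refl (I K : Finset B) (u : W) : rel cs I K u u :=
  ⟨1, one_mem _, 1, one_mem _, by group⟩

lemma rel_symm {I K : Finset B} {u v : W} (h : rel cs I K u v) : rel cs I K v u := by
  obtain ⟨a, ha, b, hb, rfl⟩ := h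
  exact ⟨a⁻¹, inv_mem ha, b⁻¹, inv_mem hb, by group⟩

lemma rel_trans {I K : Finset B} {u v w : W} (h : rel cs I K u v) (h' : rel cs I K v w) :
    rel cs I K u w := by
  obtain ⟨a, ha, b, hb, rfl⟩ := h
  obtain ⟨a', ha', b', hb', rfl⟩ := h'
  exact ⟨a' * a, mul_mem ha' ha, b * b', mul_mem hb hb', by group⟩

open Classical in
/-- The parabolic subgroup as a finset. -/
noncomputable def PGF (I : Finset B) : Finset W := univ.filter (· ∈ PG cs I)

open Classical in
lemma card_PGF (I : Finset B) : (PGF cs I).card = Nat.card ↥(PG cs I) := by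
  rw [Nat.card_eq_fintype_card, Fintype.card_subtype]
  rfl

open Classical in
/-- Number of pairs `(a, b)` in the parabolic pair stabilizing `u`. -/
noncomputable def stF (I K : Finset B) (u : W) : ℕ :=
  (((PGF cs I) ×ˢ (PGF cs K)).filter (fun p => p.1 * u * p.2 = u)).card

open Classical in
noncomputable def CL (I K : Finset B) (x : W) : Finset W := univ.filter (rel cs I K x)

open Classical in
lemma sum_st_class (I K : Finset B) (x : W) :
    ∑ u ∈ CL cs I K x, stF cs I K u = (PGF cs I).card * (PGF cs K).card := by
  have hmapsto : ∀ p ∈ (PGF cs I) ×ˢ (PGF cs K), p.1 * x * p.2 ∈ CL cs I K x := by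
    intro p hp
    simp only [Finset.mem_product, PGF, Finset.mem_filter, Finset.mem_univ, true_and] at hp
    simp only [CL, Finset.mem_filter, Finset.mem_univ, true_and]
    exact ⟨p.1, hp.1, p.2, hp.2, rfl⟩
  rw [← Finset.card_product,
    Finset.card_eq_sum_card_fiberwise hmapsto]
  apply Finset.sum_congr rfl
  intro u hu
  have hu' : rel cs I K x u := by
    simpa [CL] using hu
  obtain ⟨a₀, ha₀, b₀, hb₀, hab₀⟩ := hu'
  have hx' : a₀⁻¹ * u * b₀⁻¹ = x := by rw [hab₀]; group
  apply Finset.card_bij (fun p _ => (p.1 * a₀, b₀ * p.2))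
  · intro p hp
    simp only [Finset.mem_filter, Finset.mem_product, PGF, Finset.mem_univ, true_and] at hp ⊢
    obtain ⟨⟨hp1, hp2⟩, hp3⟩ := hp
    refine ⟨⟨mul_mem hp1 ha₀, mul_mem hb₀ hp2⟩, ?_⟩
    calc p.1 * a₀ * x * (b₀ * p.2) = p.1 * (a₀ * x * b₀) * p.2 := by group
      _ = p.1 * u * p.2 := by rw [← hab₀]
      _ = u := hp3
  · intro p hp q hq hEq
    have h1 := congrArg Prod.fst hEq
    have h2 := congrArg Prod.snd hEq
    simp only at h1 h2
    have hfst : p.1 = q.1 := by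
      have := congrArg (· * a₀⁻¹) h1
      simpa using this
    have hsnd : p.2 = q.2 := by
      have := congrArg (fun y => b₀⁻¹ * y) h2
      simpa using this
    exact Prod.ext hfst hsnd
  · intro q hq
    simp only [Finset.mem_filter, Finset.mem_product, PGF, Finset.mem_univ, true_and] at hq
    obtain ⟨⟨hq1, hq2⟩, hq3⟩ := hq
    refine ⟨(q.1 * a₀⁻¹, b₀⁻¹ * q.2), ?_, ?_⟩
    · simp only [Finset.mem_filter, Finset.mem_product, PGF, Finset.mem_univ, true_and]
      refine ⟨⟨mul_mem hq1 (inv_mem ha₀), mul_mem (inv_mem hb₀) hq2⟩, ?_⟩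
      calc q.1 * a₀⁻¹ * u * (b₀⁻¹ * q.2) = q.1 * (a₀⁻¹ * u * b₀⁻¹) * q.2 := by group
        _ = q.1 * x * q.2 := by rw [hx']
        _ = u := hq3
    · refine Prod.ext ?_ ?_ <;> simp [mul_assoc]

open Classical in
noncomputable def DistF (I K : Finset B) : Finset W := univ.filter (IsDist cs I K)

open Classical in
lemma existsUnique_dist (I K : Finset B) (u : W) :
    ∃! x : W, IsDist cs I K x ∧ rel cs I K u x := by
  obtain ⟨x, hxd, a, ha, b, hb, hxe⟩ := exists_dist cs I K u
  refine ⟨x, ⟨hxd, ⟨a, ha, b, hb, hxe⟩⟩, ?_⟩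
  rintro y ⟨hyd, hyrel⟩
  obtain ⟨a', ha', b', hb', hye⟩ := hyrel
  have hxy : rel cs I K x y := rel_trans cs (rel_symm cs ⟨a, ha, b, hb, hxe⟩) ⟨a', ha', b', hb', hye⟩
  obtain ⟨a'', ha'', b'', hb'', hye''⟩ := hxy
  exact dist_unique cs hxd hyd ha'' hb'' hye''

open Classical in
lemma sum_st_univ (I K : Finset B) :
    ∑ u : W, stF cs I K u
      = Nat.card ↥(PG cs I) * Nat.card ↥(PG cs K) * (DistF cs I K).card := by
  set δ : W → W := fun u => Classical.choose (existsUnique_dist cs I K u).exists with hδ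
  have hδspec : ∀ u, IsDist cs I K (δ u) ∧ rel cs I K u (δ u) := fun u =>
    Classical.choose_spec (existsUnique_dist cs I K u).exists
  have hmaps : ∀ u ∈ univ, δ u ∈ DistF cs I K := by
    intro u _
    simp only [DistF, Finset.mem_filter, Finset.mem_univ, true_and]
    exact (hδspec u).1
  rw [← Finset.sum_fiberwise_of_maps_to hmaps (stF cs I K)]
  have hfib : ∀ x ∈ DistF cs I K, univ.filter (fun u => δ u = x) = CL cs I K x := by
    intro x hx
    simp only [DistF, Finset.mem_filter, Finset.mem_univ, true_and] at hx
    ext u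
    simp only [Finset.mem_filter, Finset.mem_univ, true_and, CL]
    constructor
    · rintro rfl
      exact rel_symm cs (hδspec u).2
    · intro hrel
      exact ((existsUnique_dist cs I K u).unique ⟨(hδspec u).1, (hδspec u).2⟩
        ⟨hx, rel_symm cs hrel⟩)
  rw [Finset.sum_congr rfl (fun x hx => by rw [hfib x hx, sum_st_class cs I K x])]
  rw [Finset.sum_const, smul_eq_mul, card_PGF, card_PGF]
  ring

open Classical in
lemma card_all_descents :
    (univ.filter (fun u : W =>
      (∀ i : B, cs.IsLeftDescent u i) ∧ (∀ k : B, cs.IsRightDescent u k))).card = 1 := by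
  obtain ⟨w₀, _, hw₀max⟩ := Finset.exists_max_image univ cs.length ⟨1, Finset.mem_univ 1⟩
  have hmax : ∀ v : W, cs.length v ≤ cs.length w₀ := fun v => hw₀max v (Finset.mem_univ v)
  have hset : (univ.filter (fun u : W =>
      (∀ i : B, cs.IsLeftDescent u i) ∧ (∀ k : B, cs.IsRightDescent u k))) = {w₀} := by
    ext u
    simp only [Finset.mem_filter, Finset.mem_univ, true_and, Finset.mem_singleton]
    constructor
    · rintro ⟨_, hR⟩
      exact eq_longest_of_all_right_descents cs hmax hR
    · intro h
      rw [h]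
      constructor
      · intro i
        unfold CoxeterSystem.IsLeftDescent
        have h1 := cs.length_simple_mul_ne w₀ i
        have h2 := hmax (σ i * w₀)
        omega
      · intro k
        unfold CoxeterSystem.IsRightDescent
        have h1 := cs.length_mul_simple_ne w₀ k
        have h2 := hmax (w₀ * σ k)
        omega
  rw [hset, Finset.card_singleton]

end Counting

section Assembly

variable [Fintype W]

open Classical Finset

/-- The sign character, valued in `ℝ`. -/
noncomputable def eps (w : W) : ℝ := (-1) ^ cs.length w

lemma neg_one_pow_mod2 {a b : ℕ} (h : a % 2 = b % 2) : ((-1 : ℝ)) ^ a = (-1) ^ b := by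
  conv_lhs => rw [← Nat.div_add_mod a 2, pow_add, pow_mul]
  conv_rhs => rw [← Nat.div_add_mod b 2, pow_add, pow_mul]
  norm_num
  rw [h]

lemma eps_conj (g x : W) : eps cs (g * x * g⁻¹) = eps cs x := by
  apply neg_one_pow_mod2
  have h1 := cs.length_mul_mod_two (g * x) g⁻¹
  have h2 := cs.length_mul_mod_two g x
  rw [cs.length_inv] at h1
  omega

lemma eps_simple_mul (i : B) (x : W) : eps cs (σ i * x) = - eps cs x := by
  have h2 := cs.length_mul_mod_two (σ i) x
  rw [cs.length_simple] at h2
  unfold eps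
  rw [neg_one_pow_mod2 h2, pow_add, pow_one]
  ring

open Classical in
/-- The number of `g` conjugating `w` into the parabolic subgroup. -/
noncomputable def NI (I : Finset B) (w : W) : ℕ :=
  (univ.filter (fun g : W => g⁻¹ * w * g ∈ PG cs I)).card

open Classical in
lemma NI_cast (I : Finset B) (w : W) :
    (NI cs I w : ℝ) = ∑ g : W, (if g⁻¹ * w * g ∈ PG cs I then (1 : ℝ) else 0) := by
  rw [NI, Finset.card_filter, Nat.cast_sum]
  simp

/-- conjugation as an equivalence -/
def conjEquiv (g : W) : W ≃ W where
  toFun x := g * x * g⁻¹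
  invFun y := g⁻¹ * y * g
  left_inv x := by group
  right_inv y := by group

open Classical in
lemma sum_NI_eps (I : Finset B) :
    ∑ w : W, (NI cs I w : ℝ) * eps cs w
      = (Fintype.card W : ℝ) * ∑ x ∈ PGF cs I, eps cs x := by
  have step1 : ∑ w : W, (NI cs I w : ℝ) * eps cs w
      = ∑ g : W, ∑ w : W, (if g⁻¹ * w * g ∈ PG cs I then (1 : ℝ) else 0) * eps cs w := by
    rw [Finset.sum_comm]
    apply Finset.sum_congr rfl
    intro w _
    rw [NI_cast, Finset.sum_mul]
  rw [step1]
  have step2 : ∀ g : W, ∑ w : W, (if g⁻¹ * w * g ∈ PG cs I then (1 : ℝ) else 0) * eps cs w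
      = ∑ x ∈ PGF cs I, eps cs x := by
    intro g
    rw [← Equiv.sum_comp (conjEquiv g)
      (fun w => (if g⁻¹ * w * g ∈ PG cs I then (1 : ℝ) else 0) * eps cs w)]
    have : ∀ x : W, (if g⁻¹ * (conjEquiv g x) * g ∈ PG cs I then (1 : ℝ) else 0)
        * eps cs (conjEquiv g x) = (if x ∈ PG cs I then (1 : ℝ) else 0) * eps cs x := by
      intro x
      have hc : g⁻¹ * (conjEquiv g x) * g = x := by
        show g⁻¹ * (g * x * g⁻¹) * g = x
        group
      rw [hc]
      have he : eps cs (conjEquiv g x) = eps cs x := eps_conj cs g x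
      rw [he]
    rw [Finset.sum_congr rfl (fun x _ => this x)]
    simp only [ite_mul, one_mul, zero_mul]
    rw [← Finset.sum_filter]
    rfl
  rw [Finset.sum_congr rfl (fun g _ => step2 g), Finset.sum_const, Finset.card_univ,
    nsmul_eq_mul]

open Classical in
lemma sum_eps_PG_of_nonempty {I : Finset B} (hne : I.Nonempty) :
    ∑ x ∈ PGF cs I, eps cs x = 0 := by
  obtain ⟨i, hi⟩ := hne
  have hmem : σ i ∈ PG cs I := simple_mem_PG cs hi
  have hbij : ∑ x ∈ PGF cs I, eps cs x = ∑ x ∈ PGF cs I, eps cs (σ i * x) := by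
    apply Finset.sum_nbij' (fun x => σ i * x) (fun x => σ i * x)
    · intro a ha
      simp only [PGF, Finset.mem_filter, Finset.mem_univ, true_and] at ha ⊢
      exact mul_mem hmem ha
    · intro a ha
      simp only [PGF, Finset.mem_filter, Finset.mem_univ, true_and] at ha ⊢
      exact mul_mem hmem ha
    · intro a _
      rw [cs.simple_mul_simple_cancel_left]
    · intro a _
      rw [cs.simple_mul_simple_cancel_left]
    · intro a _
      rw [cs.simple_mul_simple_cancel_left]
  have : ∑ x ∈ PGF cs I, eps cs (σ i * x) = - ∑ x ∈ PGF cs I, eps cs x := by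
    rw [← Finset.sum_neg_distrib]
    exact Finset.sum_congr rfl (fun x _ => eps_simple_mul cs i x)
  rw [this] at hbij
  linarith

lemma PG_empty : PG cs (∅ : Finset B) = ⊥ := by
  unfold PG
  rw [Finset.coe_empty, Set.image_empty, Subgroup.closure_empty]

open Classical in
lemma PGF_empty : PGF cs (∅ : Finset B) = {1} := by
  ext x
  simp [PGF, PG_empty, Subgroup.mem_bot]

lemma card_PG_empty : Nat.card ↥(PG cs (∅ : Finset B)) = 1 := by
  rw [PG_empty]
  exact Subgroup.card_bot

variable [Fintype B]

lemma PG_univ : PG cs (Finset.univ : Finset B) = ⊤ := by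
  unfold PG
  rw [Finset.coe_univ, Set.image_univ]
  exact cs.subgroup_closure_range_simple

open Classical in
lemma stF_eq_count (I K : Finset B) (u : W) :
    stF cs I K u
      = (univ.filter (fun x : W => x ∈ PG cs I ∧ u⁻¹ * x * u ∈ PG cs K)).card := by
  unfold stF
  apply Finset.card_bij (fun p _ => p.1)
  · intro p hp
    simp only [Finset.mem_filter, Finset.mem_product, PGF, Finset.mem_univ, true_and] at hp ⊢
    obtain ⟨⟨hp1, hp2⟩, hp3⟩ := hp
    refine ⟨hp1, ?_⟩
    have hp2' : p.2 = u⁻¹ * p.1⁻¹ * u := by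
      have := congrArg (fun y => u⁻¹ * p.1⁻¹ * y) hp3
      simpa [mul_assoc] using this
    have : (u⁻¹ * p.1 * u)⁻¹ = p.2 := by rw [hp2']; group
    rw [← inv_inv (u⁻¹ * p.1 * u), this]
    exact inv_mem hp2
  · intro p hp q hq hEq
    simp only [Finset.mem_filter, Finset.mem_product, PGF, Finset.mem_univ, true_and] at hp hq
    have hp2' : p.2 = u⁻¹ * p.1⁻¹ * u := by
      have := congrArg (fun y => u⁻¹ * p.1⁻¹ * y) hp.2
      simpa [mul_assoc] using this
    have hq2' : q.2 = u⁻¹ * q.1⁻¹ * u := by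
      have := congrArg (fun y => u⁻¹ * q.1⁻¹ * y) hq.2
      simpa [mul_assoc] using this
    refine Prod.ext hEq ?_
    rw [hp2', hq2', hEq]
  · intro x hx
    simp only [Finset.mem_filter, Finset.mem_univ, true_and] at hx
    refine ⟨(x, u⁻¹ * x⁻¹ * u), ?_, rfl⟩
    simp only [Finset.mem_filter, Finset.mem_product, PGF, Finset.mem_univ, true_and]
    have h2 : u⁻¹ * x⁻¹ * u ∈ PG cs K := by
      have := inv_mem hx.2
      have heq : (u⁻¹ * x * u)⁻¹ = u⁻¹ * x⁻¹ * u := by group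
      rwa [heq] at this
    exact ⟨⟨hx.1, h2⟩, by group⟩

open Classical in
lemma sum_NI_NK (I K : Finset B) :
    ∑ w : W, (NI cs I w : ℝ) * (NI cs K w : ℝ)
      = (Fintype.card W : ℝ) * ∑ u : W, (stF cs I K u : ℝ) := by
  have expand : ∀ w : W, (NI cs I w : ℝ) * (NI cs K w : ℝ)
      = ∑ g : W, ∑ h : W, (if g⁻¹ * w * g ∈ PG cs I then (1:ℝ) else 0)
          * (if h⁻¹ * w * h ∈ PG cs K then (1:ℝ) else 0) := by
    intro w
    rw [NI_cast, NI_cast, Finset.sum_mul_sum]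
  rw [Finset.sum_congr rfl (fun w _ => expand w), Finset.sum_comm]
  have inner : ∀ g : W, ∑ w : W, ∑ h : W,
      (if g⁻¹ * w * g ∈ PG cs I then (1:ℝ) else 0)
        * (if h⁻¹ * w * h ∈ PG cs K then (1:ℝ) else 0)
      = ∑ u : W, (stF cs I K u : ℝ) := by
    intro g
    rw [← Equiv.sum_comp (conjEquiv g) (fun w => ∑ h : W,
      (if g⁻¹ * w * g ∈ PG cs I then (1:ℝ) else 0)
        * (if h⁻¹ * w * h ∈ PG cs K then (1:ℝ) else 0))]
    have hx : ∀ x : W, g⁻¹ * (conjEquiv g x) * g = x := by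
      intro x
      show g⁻¹ * (g * x * g⁻¹) * g = x
      group
    have step : ∀ x : W, (∑ h : W,
        (if g⁻¹ * (conjEquiv g x) * g ∈ PG cs I then (1:ℝ) else 0)
          * (if h⁻¹ * (conjEquiv g x) * h ∈ PG cs K then (1:ℝ) else 0))
        = ∑ u : W, (if x ∈ PG cs I then (1:ℝ) else 0)
            * (if u⁻¹ * x * u ∈ PG cs K then (1:ℝ) else 0) := by
      intro x
      rw [← Equiv.sum_comp (Equiv.mulLeft g) (fun h =>
        (if g⁻¹ * (conjEquiv g x) * g ∈ PG cs I then (1:ℝ) else 0)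
          * (if h⁻¹ * (conjEquiv g x) * h ∈ PG cs K then (1:ℝ) else 0))]
      apply Finset.sum_congr rfl
      intro u _
      rw [hx]
      congr 2
      show ((g * u)⁻¹ * (g * x * g⁻¹) * (g * u) ∈ PG cs K) = (u⁻¹ * x * u ∈ PG cs K)
      have : (g * u)⁻¹ * (g * x * g⁻¹) * (g * u) = u⁻¹ * x * u := by group
      rw [this]
    rw [Finset.sum_congr rfl (fun x _ => step x), Finset.sum_comm]
    apply Finset.sum_congr rfl
    intro u _
    rw [stF_eq_count, Finset.card_filter, Nat.cast_sum]
    apply Finset.sum_congr rfl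
    intro x _
    by_cases h1 : x ∈ PG cs I <;> by_cases h2 : u⁻¹ * x * u ∈ PG cs K <;>
      simp [h1, h2]
  rw [Finset.sum_congr rfl (fun g _ => inner g), Finset.sum_const, Finset.card_univ,
    nsmul_eq_mul]


open Classical in
/-- The Deligne–Lusztig-style alternating sum, as a real-valued function. -/
noncomputable def Ffun (w : W) : ℝ :=
  ∑ I : Finset B, (-1 : ℝ) ^ I.card *
    (((Nat.card ↥(PG cs I)) : ℝ)⁻¹ * (NI cs I w : ℝ))

lemma card_PG_pos (I : Finset B) : 0 < Nat.card ↥(PG cs I) :=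
  Nat.card_pos

open Classical in
lemma sum_F_eps : ∑ w : W, Ffun cs w * eps cs w = (Fintype.card W : ℝ) := by
  have h1 : ∑ w : W, Ffun cs w * eps cs w
      = ∑ I : Finset B, (-1:ℝ)^I.card * (((Nat.card ↥(PG cs I)):ℝ)⁻¹ *
          ∑ w : W, (NI cs I w : ℝ) * eps cs w) := by
    unfold Ffun
    rw [Finset.sum_congr rfl (fun w (_ : w ∈ univ) => Finset.sum_mul _ _ (eps cs w))]
    rw [Finset.sum_comm]
    apply Finset.sum_congr rfl
    intro I _
    rw [Finset.mul_sum, Finset.mul_sum]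
    apply Finset.sum_congr rfl
    intro w _
    ring
  rw [h1]
  rw [Finset.sum_eq_single (∅ : Finset B)]
  · rw [card_PG_empty, sum_NI_eps, PGF_empty cs]
    have : eps cs (1 : W) = 1 := by
      unfold eps
      rw [cs.length_one, pow_zero]
    simp [this]
  · intro I _ hIne
    rw [sum_NI_eps, sum_eps_PG_of_nonempty cs (Finset.nonempty_iff_ne_empty.mpr hIne)]
    ring
  · intro h
    exact absurd (Finset.mem_univ ∅) h

open Classical in
lemma gL_eval (u : W) :
    ∑ I : Finset B, (-1:ℝ)^I.card * (if (∀ i ∈ I, ¬ cs.IsLeftDescent u i) then 1 else 0)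
      = if (∀ i : B, cs.IsLeftDescent u i) then 1 else 0 := by
  set Ac : Finset B := univ.filter (fun i => ¬ cs.IsLeftDescent u i) with hAc
  have hcond : ∀ I : Finset B, (∀ i ∈ I, ¬ cs.IsLeftDescent u i) ↔ I ⊆ Ac := by
    intro I
    constructor
    · intro h i hi
      simp only [hAc, Finset.mem_filter, Finset.mem_univ, true_and]
      exact h i hi
    · intro h i hi
      have := h hi
      simpa [hAc] using this
  have h1 : ∑ I : Finset B, (-1:ℝ)^I.card * (if (∀ i ∈ I, ¬ cs.IsLeftDescent u i) then 1 else 0)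
      = ∑ I ∈ Ac.powerset, (-1:ℝ)^I.card := by
    have h2 : ∀ I : Finset B,
        (-1:ℝ)^I.card * (if (∀ i ∈ I, ¬ cs.IsLeftDescent u i) then 1 else 0)
          = if I ⊆ Ac then (-1:ℝ)^I.card else 0 := by
      intro I
      rw [mul_ite, mul_one, mul_zero]
      by_cases h : I ⊆ Ac
      · rw [if_pos ((hcond I).mpr h), if_pos h]
      · rw [if_neg (fun hc => h ((hcond I).mp hc)), if_neg h]
    rw [Finset.sum_congr rfl (fun I _ => h2 I), ← Finset.sum_filter]
    congr 1
    ext I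
    simp [Finset.mem_powerset]
  have hcast : ∑ I ∈ Ac.powerset, (-1:ℝ)^I.card
      = ((∑ I ∈ Ac.powerset, (-1:ℤ)^I.card : ℤ) : ℝ) := by
    push_cast
    rfl
  have hiff : (Ac = ∅) ↔ (∀ i : B, cs.IsLeftDescent u i) := by
    constructor
    · intro h i
      by_contra hc
      have : i ∈ Ac := by simp [hAc, hc]
      rw [h] at this
      simp at this
    · intro h
      rw [Finset.eq_empty_iff_forall_notMem]
      intro i hi
      simp only [hAc, Finset.mem_filter, Finset.mem_univ, true_and] at hi
      exact hi (h i)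
  rw [h1, hcast, Finset.sum_powerset_neg_one_pow_card]
  simp only [hiff]
  split_ifs <;> simp

open Classical in
lemma gR_eval (u : W) :
    ∑ K : Finset B, (-1:ℝ)^K.card * (if (∀ k ∈ K, ¬ cs.IsRightDescent u k) then 1 else 0)
      = if (∀ k : B, cs.IsRightDescent u k) then 1 else 0 := by
  set Ac : Finset B := univ.filter (fun k => ¬ cs.IsRightDescent u k) with hAc
  have hcond : ∀ K : Finset B, (∀ k ∈ K, ¬ cs.IsRightDescent u k) ↔ K ⊆ Ac := by
    intro K
    constructor
    · intro h k hk
      simp only [hAc, Finset.mem_filter, Finset.mem_univ, true_and]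
      exact h k hk
    · intro h k hk
      have := h hk
      simpa [hAc] using this
  have h1 : ∑ K : Finset B, (-1:ℝ)^K.card * (if (∀ k ∈ K, ¬ cs.IsRightDescent u k) then 1 else 0)
      = ∑ K ∈ Ac.powerset, (-1:ℝ)^K.card := by
    have h2 : ∀ K : Finset B,
        (-1:ℝ)^K.card * (if (∀ k ∈ K, ¬ cs.IsRightDescent u k) then 1 else 0)
          = if K ⊆ Ac then (-1:ℝ)^K.card else 0 := by
      intro K
      rw [mul_ite, mul_one, mul_zero]
      by_cases h : K ⊆ Ac
      · rw [if_pos ((hcond K).mpr h), if_pos h]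
      · rw [if_neg (fun hc => h ((hcond K).mp hc)), if_neg h]
    rw [Finset.sum_congr rfl (fun K _ => h2 K), ← Finset.sum_filter]
    congr 1
    ext K
    simp [Finset.mem_powerset]
  have hcast : ∑ K ∈ Ac.powerset, (-1:ℝ)^K.card
      = ((∑ K ∈ Ac.powerset, (-1:ℤ)^K.card : ℤ) : ℝ) := by
    push_cast
    rfl
  have hiff : (Ac = ∅) ↔ (∀ k : B, cs.IsRightDescent u k) := by
    constructor
    · intro h k
      by_contra hc
      have : k ∈ Ac := by simp [hAc, hc]
      rw [h] at this
      simp at this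
    · intro h
      rw [Finset.eq_empty_iff_forall_notMem]
      intro k hk
      simp only [hAc, Finset.mem_filter, Finset.mem_univ, true_and] at hk
      exact hk (h k)
  rw [h1, hcast, Finset.sum_powerset_neg_one_pow_card]
  simp only [hiff]
  split_ifs <;> simp

open Classical in
lemma dist_alt_sum : ∑ I : Finset B, ∑ K : Finset B,
    (-1:ℝ)^I.card * (-1)^K.card * ((DistF cs I K).card : ℝ) = 1 := by
  have hD : ∀ I K : Finset B, ((DistF cs I K).card : ℝ)
      = ∑ u : W, (if (∀ i ∈ I, ¬ cs.IsLeftDescent u i) then (1:ℝ) else 0)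
          * (if (∀ k ∈ K, ¬ cs.IsRightDescent u k) then (1:ℝ) else 0) := by
    intro I K
    rw [DistF, Finset.card_filter, Nat.cast_sum]
    apply Finset.sum_congr rfl
    intro u _
    by_cases hL : (∀ i ∈ I, ¬ cs.IsLeftDescent u i) <;>
      by_cases hR : (∀ k ∈ K, ¬ cs.IsRightDescent u k)
    · rw [if_pos (show IsDist cs I K u from ⟨hL, hR⟩), if_pos hL, if_pos hR]
      norm_num
    · rw [if_neg (show ¬ IsDist cs I K u from fun h => hR h.2), if_pos hL, if_neg hR]
      norm_num
    · rw [if_neg (show ¬ IsDist cs I K u from fun h => hL h.1), if_neg hL, if_pos hR]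
      norm_num
    · rw [if_neg (show ¬ IsDist cs I K u from fun h => hL h.1), if_neg hL, if_neg hR]
      norm_num
  set FL : Finset B → W → ℝ := fun I u =>
    (-1:ℝ)^I.card * (if (∀ i ∈ I, ¬ cs.IsLeftDescent u i) then 1 else 0) with hFL
  set FR : Finset B → W → ℝ := fun K u =>
    (-1:ℝ)^K.card * (if (∀ k ∈ K, ¬ cs.IsRightDescent u k) then 1 else 0) with hFR
  have stepA : ∀ I K : Finset B,
      (-1:ℝ)^I.card * (-1)^K.card * ((DistF cs I K).card : ℝ)
        = ∑ u : W, FL I u * FR K u := by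
    intro I K
    rw [hD I K, Finset.mul_sum]
    apply Finset.sum_congr rfl
    intro u _
    rw [hFL, hFR]
    ring
  have swap : ∑ I : Finset B, ∑ K : Finset B,
      (-1:ℝ)^I.card * (-1)^K.card * ((DistF cs I K).card : ℝ)
      = ∑ u : W, (∑ I : Finset B, FL I u) * (∑ K : Finset B, FR K u) :=
    calc ∑ I : Finset B, ∑ K : Finset B,
        (-1:ℝ)^I.card * (-1)^K.card * ((DistF cs I K).card : ℝ)
        = ∑ I : Finset B, ∑ K : Finset B, ∑ u : W, FL I u * FR K u :=
          Finset.sum_congr rfl (fun I _ => Finset.sum_congr rfl (fun K _ => stepA I K))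
      _ = ∑ I : Finset B, ∑ u : W, ∑ K : Finset B, FL I u * FR K u :=
          Finset.sum_congr rfl (fun I _ => Finset.sum_comm)
      _ = ∑ u : W, ∑ I : Finset B, ∑ K : Finset B, FL I u * FR K u := Finset.sum_comm
      _ = ∑ u : W, (∑ I : Finset B, FL I u) * (∑ K : Finset B, FR K u) :=
          Finset.sum_congr rfl
            (fun u _ => (Finset.sum_mul_sum univ univ (FL · u) (FR · u)).symm)
  rw [swap]
  rw [Finset.sum_congr rfl (fun u (_ : u ∈ univ) => by rw [gL_eval, gR_eval])]
  have hfinal : ∑ u : W, (if (∀ i : B, cs.IsLeftDescent u i) then (1:ℝ) else 0)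
      * (if (∀ k : B, cs.IsRightDescent u k) then 1 else 0)
      = ((univ.filter (fun u : W =>
          (∀ i : B, cs.IsLeftDescent u i) ∧ (∀ k : B, cs.IsRightDescent u k))).card : ℝ) := by
    rw [Finset.card_filter, Nat.cast_sum]
    apply Finset.sum_congr rfl
    intro u _
    by_cases hL : (∀ i : B, cs.IsLeftDescent u i) <;>
      by_cases hR : (∀ k : B, cs.IsRightDescent u k) <;> simp [hL, hR]
  rw [hfinal]
  norm_cast
  convert card_all_descents cs using 2
  ext u
  simp [Finset.mem_filter]

open Classical in
lemma sum_F_sq : ∑ w : W, Ffun cs w * Ffun cs w = (Fintype.card W : ℝ) := by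
  have h1 : ∑ w : W, Ffun cs w * Ffun cs w
      = ∑ I : Finset B, ∑ K : Finset B,
          ((-1:ℝ)^I.card * ((Nat.card ↥(PG cs I) : ℝ))⁻¹)
          * ((-1:ℝ)^K.card * ((Nat.card ↥(PG cs K) : ℝ))⁻¹)
          * ∑ w : W, (NI cs I w : ℝ) * (NI cs K w : ℝ) := by
    unfold Ffun
    rw [Finset.sum_congr rfl (fun w (_ : w ∈ univ) => Finset.sum_mul_sum _ _ _ _)]
    rw [Finset.sum_comm]
    apply Finset.sum_congr rfl
    intro I _
    rw [Finset.sum_comm]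
    apply Finset.sum_congr rfl
    intro K _
    rw [Finset.mul_sum]
    apply Finset.sum_congr rfl
    intro w _
    ring
  rw [h1]
  have h2 : ∀ I K : Finset B,
      ((-1:ℝ)^I.card * ((Nat.card ↥(PG cs I) : ℝ))⁻¹)
          * ((-1:ℝ)^K.card * ((Nat.card ↥(PG cs K) : ℝ))⁻¹)
          * ∑ w : W, (NI cs I w : ℝ) * (NI cs K w : ℝ)
      = (Fintype.card W : ℝ) * ((-1:ℝ)^I.card * (-1)^K.card * ((DistF cs I K).card : ℝ)) := by
    intro I K
    rw [sum_NI_NK]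
    have hst : ∑ u : W, (stF cs I K u : ℝ)
        = (Nat.card ↥(PG cs I) : ℝ) * (Nat.card ↥(PG cs K) : ℝ) * ((DistF cs I K).card : ℝ) := by
      rw [← Nat.cast_sum]
      rw [sum_st_univ]
      push_cast
      ring
    rw [hst]
    have hI : ((Nat.card ↥(PG cs I) : ℝ)) ≠ 0 := by
      have := card_PG_pos cs I
      positivity
    have hK : ((Nat.card ↥(PG cs K) : ℝ)) ≠ 0 := by
      have := card_PG_pos cs K
      positivity
    field_simp
  calc ∑ I : Finset B, ∑ K : Finset B,
      ((-1:ℝ)^I.card * ((Nat.card ↥(PG cs I) : ℝ))⁻¹)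
        * ((-1:ℝ)^K.card * ((Nat.card ↥(PG cs K) : ℝ))⁻¹)
        * ∑ w : W, (NI cs I w : ℝ) * (NI cs K w : ℝ)
      = ∑ I : Finset B, ∑ K : Finset B, (Fintype.card W : ℝ)
          * ((-1:ℝ)^I.card * (-1)^K.card * ((DistF cs I K).card : ℝ)) :=
        Finset.sum_congr rfl (fun I _ => Finset.sum_congr rfl (fun K _ => h2 I K))
    _ = ∑ I : Finset B, (Fintype.card W : ℝ)
          * ∑ K : Finset B, ((-1:ℝ)^I.card * (-1)^K.card * ((DistF cs I K).card : ℝ)) :=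
        Finset.sum_congr rfl (fun I _ => (Finset.mul_sum _ _ _).symm)
    _ = (Fintype.card W : ℝ) * ∑ I : Finset B, ∑ K : Finset B,
          ((-1:ℝ)^I.card * (-1)^K.card * ((DistF cs I K).card : ℝ)) :=
        (Finset.mul_sum _ _ _).symm
    _ = (Fintype.card W : ℝ) := by rw [dist_alt_sum, mul_one]

lemma eps_sq (w : W) : eps cs w * eps cs w = 1 := by
  unfold eps
  rw [← pow_add]
  have h := neg_one_pow_mod2 (a := cs.length w + cs.length w) (b := 0) (by omega)
  rw [h, pow_zero]

open Classical in
theorem Ffun_eq_eps (w : W) : Ffun cs w = eps cs w := by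
  have hexp : ∀ v : W, (Ffun cs v - eps cs v)^2
      = Ffun cs v * Ffun cs v - 2 * (Ffun cs v * eps cs v) + eps cs v * eps cs v := by
    intro v
    ring
  have hsum : ∑ v : W, (Ffun cs v - eps cs v)^2 = 0 := by
    rw [Finset.sum_congr rfl (fun v _ => hexp v)]
    rw [Finset.sum_add_distrib, Finset.sum_sub_distrib, ← Finset.mul_sum, sum_F_sq, sum_F_eps]
    rw [Finset.sum_congr rfl (fun v _ => eps_sq cs v), Finset.sum_const, Finset.card_univ,
      nsmul_eq_mul, mul_one]
    ring
  have hzero := (Finset.sum_eq_zero_iff_of_nonneg (fun v _ => sq_nonneg _)).mp hsum w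
    (Finset.mem_univ w)
  have := pow_eq_zero_iff (n := 2) (by norm_num) |>.mp hzero
  linarith [this]

end Assembly

end SolomonAux

open SolomonAux in
open Classical in
/-- Let `(W, S)` be a Coxeter system with `W` finite, and let `V` be a
finite-dimensional complex representation of `W` with character `χ_V`. Then the virtual
character `∑_{I ⊆ S} (-1)^|I| Ind_{W_I}^W (χ_V |_{W_I})` equals the character of
`sgn ⊗ V`; that is, for every `w ∈ W`,
`∑_{I ⊆ S} (-1)^|I| (1/|W_I|) ∑_{g : g⁻¹wg ∈ W_I} χ_V (g⁻¹wg) = (-1)^(ℓ w) * χ_V w`. -/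
theorem DL_character_eq_sign_tensor_character
    {B W : Type*} [Group W] {M : CoxeterMatrix B}
    (cs : CoxeterSystem M W) [Fintype B] [Fintype W]
    (V : Type*) [AddCommGroup V] [Module ℂ V] [FiniteDimensional ℂ V]
    (ρ : Representation ℂ W V) (w : W) :
    ∑ I : Finset B,
        (-1 : ℂ) ^ I.card *
          ((Nat.card ↥(Subgroup.closure (cs.simple '' (I : Set B))) : ℂ)⁻¹ *
            ∑ g : W,
              if g⁻¹ * w * g ∈ Subgroup.closure (cs.simple '' (I : Set B)) then
                LinearMap.trace ℂ V (ρ (g⁻¹ * w * g))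
              else 0) =
      (-1 : ℂ) ^ cs.length w * LinearMap.trace ℂ V (ρ w) := by
  have hPG : ∀ I : Finset B, Subgroup.closure (cs.simple '' (I : Set B)) = PG cs I :=
    fun _ => rfl
  simp only [hPG]
  have htr : ∀ g : W, LinearMap.trace ℂ V (ρ (g⁻¹ * w * g)) = LinearMap.trace ℂ V (ρ w) := by
    intro g
    have h1 : ρ (g⁻¹ * w * g) = ρ g⁻¹ * ρ (w * g) := by
      rw [← map_mul]
      congr 1
      group
    have h2 : ρ (w * g) * ρ g⁻¹ = ρ w := by
      rw [← map_mul]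
      congr 1
      group
    rw [h1, LinearMap.trace_mul_comm, h2]
  have hinner : ∀ I : Finset B,
      (∑ g : W, if g⁻¹ * w * g ∈ PG cs I then LinearMap.trace ℂ V (ρ (g⁻¹ * w * g)) else 0)
        = (NI cs I w : ℂ) * LinearMap.trace ℂ V (ρ w) := by
    intro I
    have step : ∀ g : W,
        (if g⁻¹ * w * g ∈ PG cs I then LinearMap.trace ℂ V (ρ (g⁻¹ * w * g)) else 0)
          = (if g⁻¹ * w * g ∈ PG cs I then (1:ℂ) else 0) * LinearMap.trace ℂ V (ρ w) := by
      intro g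
      by_cases h : g⁻¹ * w * g ∈ PG cs I
      · rw [if_pos h, if_pos h, htr g, one_mul]
      · rw [if_neg h, if_neg h, zero_mul]
    rw [Finset.sum_congr rfl (fun g _ => step g), ← Finset.sum_mul]
    congr 1
    rw [NI, Finset.card_filter, Nat.cast_sum]
    apply Finset.sum_congr rfl
    intro g _
    by_cases h : g⁻¹ * w * g ∈ PG cs I <;> simp [h]
  rw [Finset.sum_congr rfl (fun I (_ : I ∈ Finset.univ) => by rw [hinner I])]
  have hmain : ∑ I : Finset B,
      (-1 : ℂ) ^ I.card * ((Nat.card ↥(PG cs I) : ℂ)⁻¹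
        * ((NI cs I w : ℂ) * LinearMap.trace ℂ V (ρ w)))
      = (∑ I : Finset B,
          (-1 : ℂ) ^ I.card * ((Nat.card ↥(PG cs I) : ℂ)⁻¹ * (NI cs I w : ℂ)))
        * LinearMap.trace ℂ V (ρ w) := by
    rw [Finset.sum_mul]
    apply Finset.sum_congr rfl
    intro I _
    ring
  rw [hmain]
  congr 1
  have hF : ((Ffun cs w : ℝ) : ℂ)
      = ∑ I : Finset B,
          (-1 : ℂ) ^ I.card * ((Nat.card ↥(PG cs I) : ℂ)⁻¹ * (NI cs I w : ℂ)) := by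
    unfold Ffun
    push_cast
    rfl
  rw [← hF, Ffun_eq_eps cs w]
  unfold eps
  push_cast
  rfl
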